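/- For n > 2γ and γ ∈ (0,1), it holds that g_{n,γ} · ∫_{ℝⁿ} |y|^{−(n−2γ)} (2γ|y|² − n)(1+|y|²)^{−(n+2γ+2)/2} dy = −(n−2γ) · α_{n,γ}^{1−p}, where p = (n+2γ)/(n−2γ), g_{n,γ} = Γ((n−2γ)/2)/(π^{n/2} 2^{2γ} Γ(γ)), and α_{n,γ} = 2^{(n−2γ)/2} (Γ((n+2γ)/2)/Γ((n−2γ)/2))^{(n−2γ)/(4γ)}. Equivalently, α_{n,γ}^p g_{n,γ} ∫_{ℝⁿ} |y|^{−(n−2γ)} (2γ|y|²−n)(1+|y|²)^{−(n+2γ+2)/2} dy = −α_{n,γ}(n−2γ). -/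

import Mathlib

open MeasureTheory

/-- The constant `α_{n,γ}`. -/
noncomputable def alphaConst (n : ℕ) (γ : ℝ) : ℝ :=
  2 ^ (((n:ℝ) - 2*γ)/2) *
    (Real.Gamma (((n:ℝ) + 2*γ)/2) / Real.Gamma (((n:ℝ) - 2*γ)/2)) ^ (((n:ℝ) - 2*γ)/(4*γ))

/-- The constant `g_{n,γ}`. -/
noncomputable def gConst (n : ℕ) (γ : ℝ) : ℝ :=
  Real.Gamma (((n:ℝ) - 2*γ)/2) / (Real.pi ^ ((n:ℝ)/2) * 2 ^ (2*γ) * Real.Gamma γ)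

section Aux
open Real Set MeasureTheory

-- real Beta on Ioo 0 1
lemma betaIoo_integrable {a b : ℝ} (ha : 0 < a) (hb : 0 < b) :
    IntegrableOn (fun x : ℝ => x ^ (a-1) * (1-x) ^ (b-1)) (Ioo (0:ℝ) 1) := by
  have h := (Complex.betaIntegral_convergent (u := (a:ℂ)) (v := (b:ℂ))
    (by simpa using ha) (by simpa using hb)).1
  have h2 := (h.mono_set Ioo_subset_Ioc_self).re
  refine IntegrableOn.congr_fun h2 (fun x hx => ?_) measurableSet_Ioo
  obtain ⟨hx0, hx1⟩ := hx
  have e1 : ((x:ℂ)) ^ ((a:ℂ)-1) = ((x ^ (a-1) : ℝ) : ℂ) := by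
    rw [Complex.ofReal_cpow hx0.le]; norm_num
  have e2 : ((1 - (x:ℂ))) ^ ((b:ℂ)-1) = (((1-x) ^ (b-1) : ℝ) : ℂ) := by
    rw [show (1 - (x:ℂ)) = ((1-x : ℝ) : ℂ) by push_cast; ring,
      Complex.ofReal_cpow (by linarith)]
    norm_num
  simp [e1, e2, ← Complex.ofReal_mul]


lemma betaIoo_eq {a b : ℝ} (ha : 0 < a) (hb : 0 < b) :
    ∫ x in Ioo (0:ℝ) 1, x ^ (a-1) * (1-x) ^ (b-1)
      = Real.Gamma a * Real.Gamma b / Real.Gamma (a+b) := by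
  have hab : Real.Gamma (a+b) ≠ 0 := (Real.Gamma_pos_of_pos (by linarith)).ne'
  rw [eq_div_iff hab]
  have key := Complex.Gamma_mul_Gamma_eq_betaIntegral (s := (a:ℂ)) (t := (b:ℂ))
    (by simpa using ha) (by simpa using hb)
  have hbeta : Complex.betaIntegral a b
      = ((∫ x in Ioo (0:ℝ) 1, x ^ (a-1) * (1-x) ^ (b-1) : ℝ) : ℂ) := by
    rw [Complex.betaIntegral, intervalIntegral.integral_of_le zero_le_one,
      integral_Ioc_eq_integral_Ioo]
    rw [show ((∫ x in Ioo (0:ℝ) 1, x ^ (a-1) * (1-x) ^ (b-1) : ℝ) : ℂ)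
        = ∫ x in Ioo (0:ℝ) 1, ((x ^ (a-1) * (1-x) ^ (b-1) : ℝ) : ℂ) from
      (integral_ofReal (𝕜 := ℂ)).symm]
    refine setIntegral_congr_fun measurableSet_Ioo (fun x hx => ?_)
    obtain ⟨hx0, hx1⟩ := hx
    have e1 : ((x:ℂ)) ^ ((a:ℂ)-1) = ((x ^ (a-1) : ℝ) : ℂ) := by
      rw [Complex.ofReal_cpow hx0.le]; norm_num
    have e2 : ((1 - (x:ℂ))) ^ ((b:ℂ)-1) = (((1-x) ^ (b-1) : ℝ) : ℂ) := by
      rw [show (1 - (x:ℂ)) = ((1-x : ℝ) : ℂ) by push_cast; ring,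
        Complex.ofReal_cpow (by linarith)]
      norm_num
    simp [e1, e2]
  rw [hbeta] at key
  have : ((Real.Gamma a * Real.Gamma b : ℝ) : ℂ)
      = ((Real.Gamma (a+b) * ∫ x in Ioo (0:ℝ) 1, x ^ (a-1) * (1-x) ^ (b-1) : ℝ) : ℂ) := by
    push_cast
    rw [← Complex.Gamma_ofReal, ← Complex.Gamma_ofReal, ← Complex.Gamma_ofReal, key]
    push_cast
    ring
  have h2 := Complex.ofReal_injective this
  rw [h2]; ring


lemma cov_facts :
    (∀ u ∈ Ioo (0:ℝ) 1, HasDerivWithinAt (fun u : ℝ => u / (1-u)) (1/(1-u)^2) (Ioo (0:ℝ) 1) u)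
    ∧ InjOn (fun u : ℝ => u / (1-u)) (Ioo (0:ℝ) 1)
    ∧ (fun u : ℝ => u / (1-u)) '' (Ioo (0:ℝ) 1) = Ioi (0:ℝ) := by
  refine ⟨fun u hu => ?_, fun u hu v hv h => ?_, ?_⟩
  · obtain ⟨h0, h1⟩ := hu
    have hne : (1:ℝ) - u ≠ 0 := by linarith
    have := (hasDerivAt_id u).div ((hasDerivAt_id u).const_sub 1) hne
    refine HasDerivWithinAt.congr_deriv this.hasDerivWithinAt ?_
    simp only [id]; ring
  · obtain ⟨h0, h1⟩ := hu; obtain ⟨g0, g1⟩ := hv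
    have hne : (1:ℝ) - u ≠ 0 := by linarith
    have gne : (1:ℝ) - v ≠ 0 := by linarith
    simp only at h
    rw [div_eq_div_iff hne gne] at h
    nlinarith
  · ext t
    simp only [mem_image, mem_Ioi]
    constructor
    · rintro ⟨u, ⟨h0, h1⟩, rfl⟩
      have : (0:ℝ) < 1 - u := by linarith
      positivity
    · intro ht
      refine ⟨t / (1+t), ⟨by positivity, ?_⟩, ?_⟩
      · rw [div_lt_one (by linarith)]; linarith
      · have h1t : (1:ℝ) + t ≠ 0 := by positivity
        field_simp
        ring

lemma cov_pointwise {a b : ℝ} (u : ℝ) (hu : u ∈ Ioo (0:ℝ) 1) :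
    |1/(1-u)^2| • ((u/(1-u)) ^ (a-1) * (1 + u/(1-u)) ^ (-(a+b)))
      = u ^ (a-1) * (1-u) ^ (b-1) := by
  obtain ⟨h0, h1⟩ := hu
  have hv : (0:ℝ) < 1 - u := by linarith
  have e1 : 1 + u/(1-u) = (1-u)⁻¹ := by field_simp; ring
  have A : ((1-u)⁻¹ : ℝ) ^ (-(a+b)) = (1-u) ^ (a+b) := by
    rw [← Real.rpow_neg_one (1-u), ← Real.rpow_mul hv.le, neg_one_mul, neg_neg]
  have B : (1:ℝ)/(1-u)^2 = (1-u) ^ (-2:ℝ) := by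
    rw [Real.rpow_neg hv.le, show ((2:ℝ)) = ((2:ℕ):ℝ) by norm_num, Real.rpow_natCast, one_div]
  have C : u ^ (a-1) / (1-u) ^ (a-1) = u ^ (a-1) * (1-u) ^ (-(a-1)) := by
    rw [Real.rpow_neg hv.le, div_eq_mul_inv]
  have key : ∀ p q r : ℝ, (1-u)^p * (u^(a-1) * (1-u)^q * (1-u)^r)
      = u^(a-1) * (1-u)^(p+q+r) := fun p q r => by
    rw [Real.rpow_add hv, Real.rpow_add hv]; ring
  rw [e1, smul_eq_mul, abs_of_pos (by positivity), div_rpow h0.le hv.le, A, B, C, key]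
  congr 1
  ring

lemma betaIoi_integrable {a b : ℝ} (ha : 0 < a) (hb : 0 < b) :
    IntegrableOn (fun t : ℝ => t ^ (a-1) * (1+t) ^ (-(a+b))) (Ioi (0:ℝ)) := by
  obtain ⟨hderiv, hinj, himg⟩ := cov_facts
  rw [← himg, integrableOn_image_iff_integrableOn_abs_deriv_smul measurableSet_Ioo hderiv hinj]
  exact IntegrableOn.congr_fun (betaIoo_integrable ha hb)
    (fun u hu => (cov_pointwise u hu).symm) measurableSet_Ioo

lemma betaIoi_eq {a b : ℝ} (ha : 0 < a) (hb : 0 < b) :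
    ∫ t in Ioi (0:ℝ), t ^ (a-1) * (1+t) ^ (-(a+b))
      = Real.Gamma a * Real.Gamma b / Real.Gamma (a+b) := by
  obtain ⟨hderiv, hinj, himg⟩ := cov_facts
  rw [← himg, integral_image_eq_integral_abs_deriv_smul measurableSet_Ioo hderiv hinj]
  rw [← betaIoo_eq ha hb]
  exact setIntegral_congr_fun measurableSet_Ioo (fun u hu => cov_pointwise u hu)

lemma integral_value (n : ℕ) (γ : ℝ) (hγ0 : 0 < γ) (hn : 2*γ < (n:ℝ)) :
    ∫ y : EuclideanSpace ℝ (Fin n),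
        ‖y‖ ^ (-((n:ℝ) - 2*γ)) * (2*γ*‖y‖^2 - (n:ℝ)) *
          (1 + ‖y‖^2) ^ (-(((n:ℝ) + 2*γ + 2)/2))
      = -(π ^ ((n:ℝ)/2) * Real.Gamma γ * ((n:ℝ) - 2*γ) / Real.Gamma (((n:ℝ)+2*γ)/2)) := by
  have hn0 : (0:ℝ) < n := lt_trans (by positivity) hn
  have hn1 : 1 ≤ n := by exact_mod_cast Nat.one_le_iff_ne_zero.mpr (by
    rintro rfl; simp at hn0)
  haveI : Nonempty (Fin n) := ⟨⟨0, by omega⟩⟩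
  set c : ℝ := ((n:ℝ) + 2*γ + 2)/2 with hc
  set f : ℝ → ℝ := fun r => r ^ (-((n:ℝ) - 2*γ)) * (2*γ*r^2 - (n:ℝ)) * (1 + r^2) ^ (-c)
    with hf
  set g : ℝ → ℝ := fun t => (1/2) * (t ^ (γ-1) * (2*γ*t - (n:ℝ)) * (1+t) ^ (-c)) with hg
  -- Step 1: reduce to radial integral
  have step1 : (∫ y : EuclideanSpace ℝ (Fin n),
        ‖y‖ ^ (-((n:ℝ) - 2*γ)) * (2*γ*‖y‖^2 - (n:ℝ)) * (1 + ‖y‖^2) ^ (-c))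
      = (n:ℝ) * ((volume (Metric.ball (0 : EuclideanSpace ℝ (Fin n)) 1)).toReal *
          ∫ r in Ioi (0:ℝ), r ^ (n-1) • f r) := by
    have := integral_fun_norm_addHaar (volume : Measure (EuclideanSpace ℝ (Fin n))) f
    rw [finrank_euclideanSpace_fin] at this
    rw [this, nsmul_eq_mul, smul_eq_mul]
    rfl
  -- Step 2: radial integral via r = sqrt t
  have step2 : (∫ r in Ioi (0:ℝ), r ^ (n-1) • f r) = ∫ t in Ioi (0:ℝ), g t := by
    rw [← integral_comp_rpow_Ioi_of_pos (g := g) (p := 2) two_pos]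
    refine setIntegral_congr_fun measurableSet_Ioi (fun r hr => ?_)
    have hr0 : (0:ℝ) < r := hr
    have R1 : (r:ℝ) ^ (n-1) * r ^ (-((n:ℝ) - 2*γ)) = r ^ (2*γ-1) := by
      rw [← Real.rpow_natCast r (n-1), ← Real.rpow_add hr0]
      congr 1
      rw [Nat.cast_sub hn1]
      push_cast; ring
    have R2 : r * (r^2) ^ (γ-1) = r ^ (2*γ-1) := by
      nth_rewrite 1 [← Real.rpow_one r]
      rw [← Real.rpow_natCast r 2, ← Real.rpow_mul hr0.le, ← Real.rpow_add hr0]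
      congr 1; push_cast; ring
    have hr2 : r ^ (2:ℝ) = r ^ 2 := by
      rw [show (2:ℝ) = ((2:ℕ):ℝ) by norm_num, Real.rpow_natCast]
    have hr1 : r ^ ((2:ℝ)-1) = r := by norm_num
    rw [smul_eq_mul, smul_eq_mul, hr2, hr1, hf, hg]
    calc r ^ (n-1) * (r ^ (-((n:ℝ) - 2*γ)) * (2*γ*r^2 - (n:ℝ)) * (1 + r^2) ^ (-c))
        = (r ^ (n-1) * r ^ (-((n:ℝ) - 2*γ))) * ((2*γ*r^2 - (n:ℝ)) * (1 + r^2) ^ (-c)) := by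
          ring
      _ = (r * (r^2) ^ (γ-1)) * ((2*γ*r^2 - (n:ℝ)) * (1 + r^2) ^ (-c)) := by rw [R1, ← R2]
      _ = 2 * r * ((1/2) * ((r^2) ^ (γ-1) * (2*γ*r^2 - (n:ℝ)) * (1 + r^2) ^ (-c))) := by ring
  -- Step 3: evaluate ∫ g
  have hb1 : (0:ℝ) < γ + 1 := by linarith
  have hb2 : (0:ℝ) < (n:ℝ)/2 := by positivity
  have hb3 : (0:ℝ) < (n:ℝ)/2 + 1 := by linarith
  have hint1 := betaIoi_integrable hb1 hb2
  have hint2 := betaIoi_integrable hγ0 hb3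
  have step3 : (∫ t in Ioi (0:ℝ), g t)
      = γ * (Real.Gamma (γ+1) * Real.Gamma ((n:ℝ)/2) / Real.Gamma ((γ+1) + (n:ℝ)/2))
        - (n:ℝ)/2 * (Real.Gamma γ * Real.Gamma ((n:ℝ)/2+1) / Real.Gamma (γ + ((n:ℝ)/2+1))) := by
    rw [show (∫ t in Ioi (0:ℝ), g t)
        = ∫ t in Ioi (0:ℝ),
            (γ * (t ^ ((γ+1)-1) * (1+t) ^ (-((γ+1) + (n:ℝ)/2)))
              - (n:ℝ)/2 * (t ^ (γ-1) * (1+t) ^ (-(γ + ((n:ℝ)/2+1))))) from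
      setIntegral_congr_fun measurableSet_Ioi (fun t ht => ?_)]
    · rw [integral_sub (hint1.const_mul γ) (hint2.const_mul ((n:ℝ)/2)),
        integral_const_mul, integral_const_mul, betaIoi_eq hb1 hb2, betaIoi_eq hγ0 hb3]
    · have ht0 : (0:ℝ) < t := ht
      have h1 : t ^ ((γ+1)-1) = t ^ (γ-1) * t := by
        rw [show (γ+1)-1 = (γ-1)+1 by ring, Real.rpow_add ht0, Real.rpow_one]
      have h2 : -((γ+1) + (n:ℝ)/2) = -c := by rw [hc]; ring
      have h3 : -(γ + ((n:ℝ)/2+1)) = -c := by rw [hc]; ring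
      rw [hg]
      simp only [h1, h2, h3]
      ring
  -- Step 4: volume of the unit ball
  have hΓh : (0:ℝ) < Real.Gamma ((n:ℝ)/2) := Real.Gamma_pos_of_pos hb2
  have hvol : (volume (Metric.ball (0 : EuclideanSpace ℝ (Fin n)) 1)).toReal
      = π ^ ((n:ℝ)/2) / Real.Gamma ((n:ℝ)/2 + 1) := by
    rw [EuclideanSpace.volume_ball, Fintype.card_fin, ENNReal.ofReal_one, one_pow, one_mul,
      ENNReal.toReal_ofReal (div_nonneg (by positivity) (Real.Gamma_pos_of_pos hb3).le)]
    congr 1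
    rw [← Real.rpow_natCast (√π) n, Real.sqrt_eq_rpow, ← Real.rpow_mul pi_pos.le]
    congr 1; ring
  -- Step 5: assemble and compute
  rw [step1, step2, step3, hvol]
  have hΓγ : (0:ℝ) < Real.Gamma γ := Real.Gamma_pos_of_pos hγ0
  have hγh : (0:ℝ) < γ + (n:ℝ)/2 := by positivity
  have hΓγh : (0:ℝ) < Real.Gamma (γ + (n:ℝ)/2) := Real.Gamma_pos_of_pos hγh
  have e1 : Real.Gamma (γ+1) = γ * Real.Gamma γ := Real.Gamma_add_one hγ0.ne'
  have e2 : Real.Gamma ((n:ℝ)/2+1) = (n:ℝ)/2 * Real.Gamma ((n:ℝ)/2) :=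
    Real.Gamma_add_one hb2.ne'
  have e3 : Real.Gamma ((γ+1) + (n:ℝ)/2) = (γ + (n:ℝ)/2) * Real.Gamma (γ + (n:ℝ)/2) := by
    rw [show (γ+1) + (n:ℝ)/2 = (γ + (n:ℝ)/2) + 1 by ring, Real.Gamma_add_one hγh.ne']
  have e4 : Real.Gamma (γ + ((n:ℝ)/2+1)) = (γ + (n:ℝ)/2) * Real.Gamma (γ + (n:ℝ)/2) := by
    rw [show γ + ((n:ℝ)/2+1) = (γ + (n:ℝ)/2) + 1 by ring, Real.Gamma_add_one hγh.ne']
  have e5 : Real.Gamma (((n:ℝ)+2*γ)/2) = Real.Gamma (γ + (n:ℝ)/2) := by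
    rw [show ((n:ℝ)+2*γ)/2 = γ + (n:ℝ)/2 by ring]
  have hπ : (0:ℝ) < π ^ ((n:ℝ)/2) := by positivity
  rw [e1, e2, e3, e4, e5]
  field_simp
  ring

end Aux

/-- `α_{n,γ}^p g_{n,γ} ∫ |y|^{−(n−2γ)} (2γ|y|²−n)(1+|y|²)^{−(n+2γ+2)/2} dy = −α_{n,γ}(n−2γ)`. -/
theorem stmt_14 (n : ℕ) (γ : ℝ) (hγ : γ ∈ Set.Ioo (0:ℝ) 1) (hn : 2*γ < (n:ℝ)) :
    alphaConst n γ ^ (((n:ℝ) + 2*γ)/((n:ℝ) - 2*γ)) * gConst n γ *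
        ∫ y : EuclideanSpace ℝ (Fin n),
          ‖y‖ ^ (-((n:ℝ) - 2*γ)) * (2*γ*‖y‖^2 - (n:ℝ)) *
            (1 + ‖y‖^2) ^ (-(((n:ℝ) + 2*γ + 2)/2))
      = -(alphaConst n γ * ((n:ℝ) - 2*γ)) := by
  obtain ⟨hγ0, hγ1⟩ := hγ
  have hd : (0:ℝ) < (n:ℝ) - 2*γ := by linarith
  have hΓm : (0:ℝ) < Real.Gamma (((n:ℝ)-2*γ)/2) := Real.Gamma_pos_of_pos (by linarith)
  have hΓp : (0:ℝ) < Real.Gamma (((n:ℝ)+2*γ)/2) := Real.Gamma_pos_of_pos (by linarith)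
  have hΓγ : (0:ℝ) < Real.Gamma γ := Real.Gamma_pos_of_pos hγ0
  have hR : (0:ℝ) < Real.Gamma (((n:ℝ)+2*γ)/2) / Real.Gamma (((n:ℝ)-2*γ)/2) := by positivity
  have hα : (0:ℝ) < alphaConst n γ := by unfold alphaConst; positivity
  have hαp : alphaConst n γ ^ (((n:ℝ)+2*γ)/((n:ℝ)-2*γ))
      = alphaConst n γ *
        (2 ^ (2*γ) * (Real.Gamma (((n:ℝ)+2*γ)/2) / Real.Gamma (((n:ℝ)-2*γ)/2))) := by
    rw [show ((n:ℝ)+2*γ)/((n:ℝ)-2*γ) = 1 + 4*γ/((n:ℝ)-2*γ) by field_simp; ring]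
    rw [Real.rpow_add hα, Real.rpow_one]
    congr 1
    unfold alphaConst
    rw [Real.mul_rpow (by positivity) (by positivity),
      ← Real.rpow_mul (by norm_num : (0:ℝ) ≤ 2), ← Real.rpow_mul hR.le,
      show ((n:ℝ)-2*γ)/2 * (4*γ/((n:ℝ)-2*γ)) = 2*γ by field_simp; ring,
      show ((n:ℝ)-2*γ)/(4*γ) * (4*γ/((n:ℝ)-2*γ)) = 1 by field_simp,
      Real.rpow_one]
  rw [integral_value n γ hγ0 hn, hαp]
  unfold gConst
  have hπ : (0:ℝ) < Real.pi ^ ((n:ℝ)/2) := by positivity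
  have h2 : (0:ℝ) < (2:ℝ) ^ (2*γ) := by positivity
  field_simp
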